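/- Let J be a set of prime numbers, let M be the submonoid of ℤ generated by J, and let n be a positive integer each of whose prime factors belongs to J. Then the product ring (Localization of ℤ at M) × ℤ/nℤ is solid; that is, the multiplication-induced ℤ-linear map from the tensor product over ℤ of this ring with itself to the ring is bijective. -/

import Mathlib

open TensorProduct

/-- If `k : ℤ` becomes a unit in `A` and kills `B`, then `A ⊗[ℤ] B` has only zero tensors. -/
theorem aux_tensor_zero (A B : Type*) [CommRing A] [CommRing B] (k : ℤ)
    (hA : IsUnit (k : A)) (hB : ∀ b : B, k • b = 0) (a : A) (b : B) :
    (a ⊗ₜ[ℤ] b : A ⊗[ℤ] B) = 0 := by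
  obtain ⟨u, hu⟩ := hA
  have ha : a = k • ((↑u⁻¹ : A) * a) := by
    rw [zsmul_eq_mul, ← hu, ← mul_assoc, Units.mul_inv, one_mul]
  rw [ha, smul_tmul, hB, tmul_zero]

theorem aux_tensor_zero' (A B : Type*) [CommRing A] [CommRing B] (k : ℤ)
    (hA : IsUnit (k : A)) (hB : ∀ b : B, k • b = 0) (b : B) (a : A) :
    (b ⊗ₜ[ℤ] a : B ⊗[ℤ] A) = 0 := by
  obtain ⟨u, hu⟩ := hA
  have ha : a = k • ((↑u⁻¹ : A) * a) := by
    rw [zsmul_eq_mul, ← hu, ← mul_assoc, Units.mul_inv, one_mul]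
  rw [ha, ← smul_tmul, hB, zero_tmul]


/-- If every element of `S` is an integer divided by an invertible integer, then
`x ⊗ y = 1 ⊗ (x * y)` in `S ⊗[ℤ] S`. -/
theorem aux_key_div (S : Type*) [CommRing S]
    (h : ∀ x : S, ∃ a k : ℤ, IsUnit ((k : ℤ) : S) ∧ ((k : ℤ) : S) * x = ((a : ℤ) : S)) :
    ∀ x y : S, (x ⊗ₜ[ℤ] y : S ⊗[ℤ] S) = 1 ⊗ₜ[ℤ] (x * y) := by
  intro x y
  obtain ⟨a, k, hk, hkx⟩ := h x
  obtain ⟨u, hu⟩ := hk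
  have hx : x = (↑u⁻¹ : S) * ((a : ℤ) : S) := by
    rw [← hkx, ← mul_assoc, ← hu, Units.inv_mul, one_mul]
  have h1 : (1 : S) = (↑u⁻¹ : S) * ((k : ℤ) : S) := by
    rw [← hu, Units.inv_mul]
  calc x ⊗ₜ[ℤ] y = (a • (↑u⁻¹ : S)) ⊗ₜ[ℤ] y := by
        rw [zsmul_eq_mul, mul_comm ((a : ℤ) : S), ← hx]
    _ = (↑u⁻¹ : S) ⊗ₜ[ℤ] (a • y) := smul_tmul _ _ _
    _ = (↑u⁻¹ : S) ⊗ₜ[ℤ] (k • (x * y)) := by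
        rw [zsmul_eq_mul, zsmul_eq_mul, ← mul_assoc, hkx]
    _ = (k • (↑u⁻¹ : S)) ⊗ₜ[ℤ] (x * y) := (smul_tmul _ _ _).symm
    _ = 1 ⊗ₜ[ℤ] (x * y) := by rw [zsmul_eq_mul, mul_comm ((k : ℤ) : S), ← h1]

/-- A commutative ring in which `x ⊗ y = 1 ⊗ (x * y)` is solid. -/
theorem aux_solid_of_key (S : Type*) [CommRing S]
    (key : ∀ x y : S, (x ⊗ₜ[ℤ] y : S ⊗[ℤ] S) = 1 ⊗ₜ[ℤ] (x * y)) :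
    Function.Bijective (LinearMap.mul' ℤ S) := by
  constructor
  · intro s t hst
    have hcomp : ∀ t : S ⊗[ℤ] S, t = 1 ⊗ₜ[ℤ] (LinearMap.mul' ℤ S t) := by
      intro t
      induction t using TensorProduct.induction_on with
      | zero => simp
      | tmul x y => rw [LinearMap.mul'_apply, key]
      | add u v hu hv => rw [map_add, tmul_add, ← hu, ← hv]
    rw [hcomp s, hcomp t, hst]
  · intro x
    exact ⟨x ⊗ₜ[ℤ] 1, by rw [LinearMap.mul'_apply, mul_one]⟩

/-- A product of two solid rings whose mutual tensor products vanish is solid. -/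
theorem aux_solid_prod (A B : Type*) [CommRing A] [CommRing B]
    (hA : Function.Bijective (LinearMap.mul' ℤ A))
    (hB : Function.Bijective (LinearMap.mul' ℤ B))
    (hAB : ∀ (a : A) (b : B), (a ⊗ₜ[ℤ] b : A ⊗[ℤ] B) = 0)
    (hBA : ∀ (b : B) (a : A), (b ⊗ₜ[ℤ] a : B ⊗[ℤ] A) = 0) :
    Function.Bijective (LinearMap.mul' ℤ (A × B)) := by
  have crossAB : ∀ (a : A) (d : B),
      ((a, (0 : B)) ⊗ₜ[ℤ] (((0 : A), d)) : (A × B) ⊗[ℤ] (A × B)) = 0 := by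
    intro a d
    have h := congrArg (TensorProduct.map (LinearMap.inl ℤ A B) (LinearMap.inr ℤ A B)) (hAB a d)
    simpa using h
  have crossBA : ∀ (b : B) (c : A),
      ((((0 : A), b)) ⊗ₜ[ℤ] ((c, (0 : B))) : (A × B) ⊗[ℤ] (A × B)) = 0 := by
    intro b c
    have h := congrArg (TensorProduct.map (LinearMap.inr ℤ A B) (LinearMap.inl ℤ A B)) (hBA b c)
    simpa using h
  have hAA : ∀ a c : A, (a ⊗ₜ[ℤ] c : A ⊗[ℤ] A) = (a * c) ⊗ₜ[ℤ] 1 := fun a c =>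
    hA.injective (by rw [LinearMap.mul'_apply, LinearMap.mul'_apply, mul_one])
  have hBB : ∀ b d : B, (b ⊗ₜ[ℤ] d : B ⊗[ℤ] B) = (b * d) ⊗ₜ[ℤ] 1 := fun b d =>
    hB.injective (by rw [LinearMap.mul'_apply, LinearMap.mul'_apply, mul_one])
  have key : ∀ z w : A × B, (z ⊗ₜ[ℤ] w : (A × B) ⊗[ℤ] (A × B)) = (z * w) ⊗ₜ[ℤ] 1 := by
    intro z w
    obtain ⟨a, b⟩ := z
    obtain ⟨c, d⟩ := w
    have hz : ((a, b) : A × B) = (a, 0) + (0, b) := by simp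
    have hw : ((c, d) : A × B) = (c, 0) + (0, d) := by simp
    have hone : ((1, 1) : A × B) = (1, 0) + (0, 1) := by simp
    have diagA : ((a, (0 : B)) ⊗ₜ[ℤ] ((c, (0 : B))) : (A × B) ⊗[ℤ] (A × B))
        = (a * c, (0 : B)) ⊗ₜ[ℤ] ((1 : A), (0 : B)) := by
      have h := congrArg (TensorProduct.map (LinearMap.inl ℤ A B) (LinearMap.inl ℤ A B)) (hAA a c)
      simpa using h
    have diagB : ((((0 : A), b)) ⊗ₜ[ℤ] (((0 : A), d)) : (A × B) ⊗[ℤ] (A × B))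
        = ((0 : A), b * d) ⊗ₜ[ℤ] ((0 : A), (1 : B)) := by
      have h := congrArg (TensorProduct.map (LinearMap.inr ℤ A B) (LinearMap.inr ℤ A B)) (hBB b d)
      simpa using h
    calc ((a, b) ⊗ₜ[ℤ] ((c, d)) : (A × B) ⊗[ℤ] (A × B))
        = (a, (0:B)) ⊗ₜ[ℤ] ((c, (0:B))) + (a, (0:B)) ⊗ₜ[ℤ] (((0:A), d))
          + (((0:A), b) ⊗ₜ[ℤ] ((c, (0:B))) + ((0:A), b) ⊗ₜ[ℤ] (((0:A), d))) := by
          rw [hz, hw, add_tmul, tmul_add, tmul_add]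
      _ = (a * c, (0:B)) ⊗ₜ[ℤ] ((1:A), (0:B)) + ((0:A), b * d) ⊗ₜ[ℤ] ((0:A), (1:B)) := by
          rw [crossAB, crossBA, diagA, diagB, add_zero, zero_add]
      _ = ((a * c, (0:B)) ⊗ₜ[ℤ] ((1:A), (1:B)) + ((0:A), b * d) ⊗ₜ[ℤ] ((1:A), (1:B))) := by
          rw [hone, tmul_add, tmul_add, crossAB (a*c) 1, crossBA (b*d) 1, add_zero, zero_add]
      _ = ((a, b) * (c, d)) ⊗ₜ[ℤ] (1 : A × B) := by
          rw [← add_tmul]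
          congr 1
          ext <;> simp
  constructor
  · intro x y hxy
    have hcomp : ∀ t : (A × B) ⊗[ℤ] (A × B),
        t = (LinearMap.mul' ℤ (A × B) t) ⊗ₜ[ℤ] (1 : A × B) := by
      intro t
      induction t using TensorProduct.induction_on with
      | zero => simp
      | tmul z w => rw [LinearMap.mul'_apply, ← key]
      | add s t hs ht => rw [map_add, add_tmul, ← hs, ← ht]
    rw [hcomp x, hcomp y, hxy]
  · intro x
    exact ⟨x ⊗ₜ[ℤ] 1, by rw [LinearMap.mul'_apply, mul_one]⟩

/-- Let `J` be a set of primes, `M` the submonoid of `ℤ` generated by `J`, and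
`n` a positive integer all of whose prime factors belong to `J`.  Then the
product ring `ℤ[J⁻¹] × ℤ/nℤ = (Localization of ℤ at M) × ℤ/nℤ` is solid. -/
theorem localization_prod_zmod_solid (J : Set ℕ) (hJ : ∀ p ∈ J, Nat.Prime p)
    (n : ℕ) (hn : 0 < n) (hfac : ∀ p : ℕ, p.Prime → p ∣ n → p ∈ J) :
    Function.Bijective (LinearMap.mul' ℤ
      (Localization (Submonoid.closure ((Nat.cast : ℕ → ℤ) '' J)) × ZMod n)) := by
  haveI : NeZero n := ⟨hn.ne'⟩
  set M := Submonoid.closure ((Nat.cast : ℕ → ℤ) '' J) with hM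
  -- `n` lies in `M`
  have hnM : (n : ℤ) ∈ M := by
    have h1 : (n : ℤ) = (n.primeFactorsList.map (Nat.cast : ℕ → ℤ)).prod := by
      rw [← Nat.cast_list_prod, Nat.prod_primeFactorsList hn.ne']
    rw [h1]
    refine Submonoid.list_prod_mem _ ?_
    intro x hx
    simp only [List.mem_map] at hx
    obtain ⟨p, hp, rfl⟩ := hx
    exact Submonoid.subset_closure ⟨p, hfac p (Nat.prime_of_mem_primeFactorsList hp)
      (Nat.dvd_of_mem_primeFactorsList hp), rfl⟩
  -- `n` is invertible in the localization
  have hu : IsUnit (((n : ℤ) : ℤ) : Localization M) := by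
    have h := IsLocalization.map_units (M := M) (Localization M) ⟨(n : ℤ), hnM⟩
    simpa using h
  -- `n` kills `ZMod n`
  have hkill : ∀ b : ZMod n, ((n : ℤ) : ℤ) • b = 0 := by
    intro b
    rw [zsmul_eq_mul]
    push_cast
    simp
  -- key identities
  have keyA : ∀ x y : Localization M,
      (x ⊗ₜ[ℤ] y : Localization M ⊗[ℤ] Localization M) = 1 ⊗ₜ[ℤ] (x * y) := by
    refine aux_key_div _ ?_
    intro x
    obtain ⟨⟨a, s⟩, rfl⟩ := IsLocalization.mk'_surjective M x
    refine ⟨a, (s : ℤ), ?_, ?_⟩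
    · have h := IsLocalization.map_units (M := M) (Localization M) s
      rwa [eq_intCast (algebraMap ℤ (Localization M))] at h
    · rw [← eq_intCast (algebraMap ℤ (Localization M)) (s : ℤ),
        ← eq_intCast (algebraMap ℤ (Localization M)) a]
      exact IsLocalization.mk'_spec' _ a s
  have keyB : ∀ x y : ZMod n, (x ⊗ₜ[ℤ] y : ZMod n ⊗[ℤ] ZMod n) = 1 ⊗ₜ[ℤ] (x * y) := by
    refine aux_key_div _ ?_
    intro x
    refine ⟨(x.val : ℤ), 1, by simp, ?_⟩
    push_cast [ZMod.natCast_val, ZMod.cast_id]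
    rw [one_mul]
  exact aux_solid_prod (Localization M) (ZMod n)
    (aux_solid_of_key _ keyA) (aux_solid_of_key _ keyB)
    (aux_tensor_zero _ _ (n : ℤ) hu hkill)
    (aux_tensor_zero' _ _ (n : ℤ) hu hkill)
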